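/- Let K be a field, λ₁, λ₂ ∈ K^×, A = [[λ₁, λ₁],[0, λ₂]], B = [[λ₂, 0],[−λ₂, λ₁]]. The pair (A,B) has a common invariant 1-dimensional subspace of K² if and only if λ₁² − λ₁λ₂ + λ₂² = 0. In particular, the associated B₃ representation is irreducible iff λ₁² − λ₁λ₂ + λ₂² ≠ 0. -/

import Mathlib

open Module Submodule

lemma key_iff (K : Type*) [Field K]
    (lam1 lam2 : K) (h1 : lam1 ≠ 0) (h2 : lam2 ≠ 0)
    (A B : Matrix (Fin 2) (Fin 2) K)
    (hA : A = !![lam1, lam1; 0, lam2]) (hB : B = !![lam2, 0; -lam2, lam1]) :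
    (∃ W : Submodule K (Fin 2 → K), Module.finrank K W = 1 ∧
        W.map A.mulVecLin ≤ W ∧ W.map B.mulVecLin ≤ W) ↔
      lam1 ^ 2 - lam1 * lam2 + lam2 ^ 2 = 0 := by
  subst hA hB
  constructor
  · rintro ⟨W, hrk, hAW, hBW⟩
    have hP : W.IsPrincipal := (Submodule.finrank_le_one_iff_isPrincipal W).mp (le_of_eq hrk)
    obtain ⟨v, hv⟩ := hP.principal
    have hv0 : v ≠ 0 := by
      rintro rfl
      rw [hv, Submodule.span_zero_singleton] at hrk
      simp at hrk
    have hvW : v ∈ W := hv ▸ Submodule.mem_span_singleton_self v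
    have hAv : ∃ c : K, (!![lam1, lam1; 0, lam2]).mulVec v = c • v := by
      have := hAW (Submodule.mem_map_of_mem (f := (!![lam1, lam1; 0, lam2]).mulVecLin) hvW)
      rw [hv, Submodule.mem_span_singleton] at this
      obtain ⟨c, hc⟩ := this
      exact ⟨c, hc.symm⟩
    have hBv : ∃ d : K, (!![lam2, 0; -lam2, lam1]).mulVec v = d • v := by
      have := hBW (Submodule.mem_map_of_mem (f := (!![lam2, 0; -lam2, lam1]).mulVecLin) hvW)
      rw [hv, Submodule.mem_span_singleton] at this
      obtain ⟨d, hd⟩ := this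
      exact ⟨d, hd.symm⟩
    obtain ⟨c, hc⟩ := hAv
    obtain ⟨d, hd⟩ := hBv
    set x := v 0 with hx
    set y := v 1 with hy
    have e1 : lam1 * x + lam1 * y = c * x := by
      have := congrFun hc 0
      simpa [Matrix.mulVec, dotProduct, Fin.sum_univ_two] using this
    have e2 : lam2 * y = c * y := by
      have := congrFun hc 1
      simpa [Matrix.mulVec, dotProduct, Fin.sum_univ_two] using this
    have e3 : lam2 * x = d * x := by
      have := congrFun hd 0
      simpa [Matrix.mulVec, dotProduct, Fin.sum_univ_two] using this
    have e4 : -lam2 * x + lam1 * y = d * y := by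
      have := congrFun hd 1
      simpa [Matrix.mulVec, dotProduct, Fin.sum_univ_two] using this
    by_cases hy0 : y = 0
    · -- then x ≠ 0, and e4 forces lam2 x = 0
      have hx0 : x ≠ 0 := by
        intro hx0
        apply hv0
        funext i
        fin_cases i
        · exact hx0
        · exact hy0
      rw [hy0] at e4
      simp at e4
      rcases e4 with e4 | e4
      · exact absurd e4 h2
      · exact absurd e4 hx0
    · have hc2 : c = lam2 := by
        field_simp at e2
        rcases e2 with e2 | e2
        rfl
      rw [hc2] at e1 e2
      by_cases hx0 : x = 0
      · rw [hx0] at e1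
        simp at e1
        rcases e1 with e1 | e1
        · exact absurd e1 h1
        · exact absurd e1 hy0
      · have hd2 : d = lam2 :=
          mul_right_cancel₀ hx0 (show d * x = lam2 * x by linear_combination -e3)
        rw [hd2] at e3 e4
        -- e1: lam1 x + lam1 y = lam2 x ; e4 : -lam2 x + lam1 y = lam2 y
        -- from e1: (lam2 - lam1) x = lam1 y; from e4: lam2 x = (lam1-lam2) y
        have k1 : (lam2 - lam1) * x = lam1 * y := by linear_combination -e1
        have k2 : lam2 * x = (lam1 - lam2) * y := by linear_combination -e4
        have : (lam1 ^ 2 - lam1 * lam2 + lam2 ^ 2) * (x * y) = 0 := by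
          linear_combination (lam1 * y) * k2 - ((lam1 - lam2) * y) * k1
        rcases mul_eq_zero.mp this with h | h
        · exact h
        · rcases mul_eq_zero.mp h with h' | h'
          · exact absurd h' hx0
          · exact absurd h' hy0
  · intro heq
    refine ⟨Submodule.span K {![lam1, lam2 - lam1]}, ?_, ?_, ?_⟩
    · apply finrank_span_singleton
      intro h
      apply h1
      have := congrFun h 0
      simpa using this
    · rw [Submodule.map_span, Submodule.span_le]
      rintro _ ⟨w, hw, rfl⟩
      rcases Set.mem_singleton_iff.mp hw with rfl
      have : (!![lam1, lam1; 0, lam2]).mulVecLin ![lam1, lam2 - lam1]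
          = lam2 • ![lam1, lam2 - lam1] := by
        funext i
        fin_cases i <;>
          simp [Matrix.mulVecLin, Matrix.mulVec, dotProduct, Fin.sum_univ_two] <;> ring
      rw [this]
      exact Submodule.smul_mem _ _ (Submodule.subset_span rfl)
    · rw [Submodule.map_span, Submodule.span_le]
      rintro _ ⟨w, hw, rfl⟩
      rcases Set.mem_singleton_iff.mp hw with rfl
      have : (!![lam2, 0; -lam2, lam1]).mulVecLin ![lam1, lam2 - lam1]
          = lam2 • ![lam1, lam2 - lam1] := by
        funext i
        fin_cases i <;>
          simp [Matrix.mulVecLin, Matrix.mulVec, dotProduct, Fin.sum_univ_two]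
        linear_combination -heq
      rw [this]
      exact Submodule.smul_mem _ _ (Submodule.subset_span rfl)

theorem dim2_common_invariant_line_iff (K : Type*) [Field K] [IsAlgClosed K] [CharZero K]
    (lam1 lam2 : K) (h1 : lam1 ≠ 0) (h2 : lam2 ≠ 0)
    (A B : Matrix (Fin 2) (Fin 2) K)
    (hA : A = !![lam1, lam1; 0, lam2]) (hB : B = !![lam2, 0; -lam2, lam1]) :
    ((∃ W : Submodule K (Fin 2 → K), Module.finrank K W = 1 ∧
        W.map A.mulVecLin ≤ W ∧ W.map B.mulVecLin ≤ W) ↔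
      lam1 ^ 2 - lam1 * lam2 + lam2 ^ 2 = 0) ∧
    ((∀ W : Submodule K (Fin 2 → K),
        W.map A.mulVecLin ≤ W → W.map B.mulVecLin ≤ W → W = ⊥ ∨ W = ⊤) ↔
      lam1 ^ 2 - lam1 * lam2 + lam2 ^ 2 ≠ 0) := by
  have key := key_iff K lam1 lam2 h1 h2 A B hA hB
  refine ⟨key, ?_⟩
  constructor
  · intro hall heq
    obtain ⟨W, hrk, hAW, hBW⟩ := key.mpr heq
    rcases hall W hAW hBW with rfl | rfl
    · simp at hrk
    · rw [finrank_top] at hrk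
      simp [Module.finrank_fin_fun] at hrk
  · intro hne W hAW hBW
    by_contra hcon
    push_neg at hcon
    obtain ⟨hWb, hWt⟩ := hcon
    have hrk : Module.finrank K W = 1 := by
      have hlt : Module.finrank K W < Module.finrank K (Fin 2 → K) :=
        Submodule.finrank_lt hWt
      rw [Module.finrank_fin_fun] at hlt
      have hpos : 0 < Module.finrank K W :=
        Module.finrank_pos_iff.mpr (Submodule.nontrivial_iff_ne_bot.mpr hWb)
      omega
    exact hne (key.mp ⟨W, hrk, hAW, hBW⟩)
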